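/- Let C : ℝ^d → ℝ^d be defined coordinatewise by C(x)_j = x_j / p_j with probability p_j and 0 with probability 1 − p_j, independently across coordinates, where p_j ∈ (0,1]. Then E[C(x)] = x and E[‖(I+Ω)^{-1} C(x)‖²] ≤ x^T (I+Ω)^{-1} x for the diagonal matrix Ω = Diag(1/p_j − 1). -/

import Mathlib

open MeasureTheory Matrix ProbabilityTheory
open scoped Classical

theorem stmt6 {d : ℕ} (p : Fin d → ℝ) (hp : ∀ j, 0 < p j) (hp1 : ∀ j, p j ≤ 1)
    {Ωs : Type*} [MeasurableSpace Ωs] (μ : Measure Ωs) [IsProbabilityMeasure μ]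
    (S : Fin d → Set Ωs) (hS : ∀ j, MeasurableSet (S j))
    (hpS : ∀ j, μ (S j) = ENNReal.ofReal (p j))
    (hindep : iIndepSet S μ)
    (C : Ωs → (Fin d → ℝ) → (Fin d → ℝ))
    (hC : ∀ ω x j, C ω x j = if ω ∈ S j then x j / p j else 0) :
    ∀ x : Fin d → ℝ, (∀ j, ∫ ω, C ω x j ∂μ = x j) ∧
      ∫ ω, ∑ j, ((1 + Matrix.diagonal (fun j => 1 / p j - 1))⁻¹.mulVec (C ω x) j) ^ 2 ∂μ
        ≤ x ⬝ᵥ (1 + Matrix.diagonal (fun j => 1 / p j - 1))⁻¹.mulVec x := by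
  have hinv : (1 + Matrix.diagonal (fun j => 1 / p j - 1) : Matrix (Fin d) (Fin d) ℝ)⁻¹
      = Matrix.diagonal p := by
    have h1 : (1 : Matrix (Fin d) (Fin d) ℝ) + Matrix.diagonal (fun j => 1 / p j - 1)
        = Matrix.diagonal (fun j => 1 / p j) := by
      ext i k
      by_cases h : i = k <;>
        simp [Matrix.diagonal_apply, Matrix.one_apply, h] <;> ring
    rw [h1]
    apply Matrix.inv_eq_right_inv
    rw [Matrix.diagonal_mul_diagonal]
    ext i k
    by_cases h : i = k <;>
      simp [Matrix.diagonal_apply, Matrix.one_apply, h, one_div,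
        inv_mul_cancel₀ (hp k).ne']
  intro x
  constructor
  · intro j
    have h : (fun ω => C ω x j) = (S j).indicator (fun _ => x j / p j) := by
      funext ω; rw [hC]; simp [Set.indicator_apply]
    rw [h, integral_indicator_const _ (hS j), measureReal_def, hpS j,
        ENNReal.toReal_ofReal (hp j).le, smul_eq_mul]
    rw [mul_comm, div_mul_cancel₀ _ (hp j).ne']
  · have hterm : ∀ ω j, ((1 + Matrix.diagonal (fun j => 1 / p j - 1))⁻¹.mulVec (C ω x) j) ^ 2
        = (S j).indicator (fun _ => (x j) ^ 2) ω := by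
      intro ω j
      rw [hinv, Matrix.mulVec_diagonal, hC]
      by_cases h : ω ∈ S j
      · simp only [h, if_true, Set.indicator_of_mem]
        rw [mul_comm, div_mul_cancel₀ _ (hp j).ne']
      · simp [h]
    have hLHS : ∫ ω, ∑ j, ((1 + Matrix.diagonal (fun j => 1 / p j - 1))⁻¹.mulVec (C ω x) j) ^ 2 ∂μ
        = ∑ j, p j * (x j) ^ 2 := by
      simp only [hterm]
      rw [integral_finset_sum]
      · refine Finset.sum_congr rfl fun j _ => ?_
        rw [integral_indicator_const _ (hS j), measureReal_def, hpS j,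
          ENNReal.toReal_ofReal (hp j).le, smul_eq_mul]
      · intro j _
        exact (integrable_const _).indicator (hS j)
    rw [hLHS, hinv]
    apply le_of_eq
    simp only [dotProduct, Matrix.mulVec_diagonal]
    refine Finset.sum_congr rfl fun j _ => ?_
    ring
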